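/- Let V,W be independent standard normal random variables, σ∈[0,1), τ=√(1-σ²), and U=σV+τW. Then E[sgn(UV)·V²] = (2/π)(τσ + arctan(σ/τ)). -/

import Mathlib

open Real MeasureTheory

section helpers
open Set


lemma sign_pos_mul {c t : ℝ} (hc : 0 < c) : Real.sign (c * t) = Real.sign t := by
  rcases lt_trichotomy t 0 with h | h | h
  · rw [Real.sign_of_neg h, Real.sign_of_neg (mul_neg_of_pos_of_neg hc h)]
  · simp [h]
  · rw [Real.sign_of_pos h, Real.sign_of_pos (mul_pos hc h)]

lemma radial : ∫ r in Set.Ioi (0:ℝ), r ^ 3 * Real.exp (-r ^ 2 / 2) = 2 := by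
  have hint : IntegrableOn (fun r : ℝ => r ^ 3 * Real.exp (-r ^ 2 / 2)) (Set.Ioi 0) := by
    have := (integrable_rpow_mul_exp_neg_mul_sq (b := 1/2) (by norm_num) (s := 3) (by norm_num)).integrableOn (s := Set.Ioi 0)
    apply this.congr_fun ?_ measurableSet_Ioi
    intro x hx
    have h3 : x ^ (3:ℝ) = x ^ (3:ℕ) := by
      rw [show (3:ℝ) = ((3:ℕ):ℝ) by norm_num, Real.rpow_natCast]
    simp only [h3]
    ring_nf
  have hderiv : ∀ x ∈ Set.Ioi (0:ℝ), HasDerivAt (fun r : ℝ => -(r ^ 2 + 2) * Real.exp (-r ^ 2 / 2)) (x ^ 3 * Real.exp (-x ^ 2 / 2)) x := by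
    intro x _
    have h1 : HasDerivAt (fun r : ℝ => -(r ^ 2 + 2) : ℝ → ℝ) (-(2 * x)) x := by
      have := ((hasDerivAt_pow 2 x).add_const 2).neg
      exact this.congr_deriv (by norm_num)
    have h2 : HasDerivAt (fun r : ℝ => Real.exp (-r ^ 2 / 2)) (Real.exp (-x ^ 2 / 2) * (-(2*x)/2)) x := by
      have hin : HasDerivAt (fun r : ℝ => -r ^ 2 / 2) (-(2*x)/2) x := by
        have := ((hasDerivAt_pow 2 x).neg).div_const 2
        simpa using this
      exact (Real.hasDerivAt_exp _).comp x hin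
    have := h1.mul h2
    exact this.congr_deriv (by ring)
  have htend : Filter.Tendsto (fun r : ℝ => -(r ^ 2 + 2) * Real.exp (-r ^ 2 / 2)) Filter.atTop (nhds 0) := by
    have hcomp : Filter.Tendsto (fun r : ℝ => r ^ 2 / 2) Filter.atTop Filter.atTop := by
      apply Filter.Tendsto.atTop_div_const (by norm_num)
      exact Filter.tendsto_pow_atTop (by norm_num)
    have hu : Filter.Tendsto (fun u : ℝ => -(2*u + 2) * Real.exp (-u)) Filter.atTop (nhds 0) := by
      have h1 := tendsto_pow_mul_exp_neg_atTop_nhds_zero 1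
      have h0 := tendsto_pow_mul_exp_neg_atTop_nhds_zero 0
      have := ((h1.const_mul (-2)).add (h0.const_mul (-2)))
      simp only [pow_one, pow_zero, one_mul, mul_zero, add_zero] at this
      convert this using 2 with u
      ring
    have := hu.comp hcomp
    convert this using 2 with r
    simp only [Function.comp_apply]
    rw [neg_div]
    ring_nf
  have := integral_Ioi_of_hasDerivAt_of_tendsto (a := 0)
    (f := fun r : ℝ => -(r ^ 2 + 2) * Real.exp (-r ^ 2 / 2))
    (f' := fun r : ℝ => r ^ 3 * Real.exp (-r ^ 2 / 2)) ?_ hderiv hint htend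
  · rw [this]; norm_num
  · exact (Continuous.continuousWithinAt (by continuity))


lemma piece (α a b : ℝ) (hab : a ≤ b) (ε : ℝ)
    (h : ∀ θ ∈ Set.Ioo a b, Real.sign (Real.cos θ * Real.cos (θ - α)) = ε) :
    ∫ θ in Set.Ioc a b, Real.sign (Real.cos θ * Real.cos (θ - α)) * Real.cos θ ^ 2
      = ε * ((Real.cos b * Real.sin b - Real.cos a * Real.sin a + b - a) / 2) := by
  rw [integral_Ioc_eq_integral_Ioo,
    setIntegral_congr_fun measurableSet_Ioo
      (g := fun θ => ε * Real.cos θ ^ 2) (fun θ hθ => by simp only; rw [h θ hθ]),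
    MeasureTheory.integral_const_mul, ← integral_Ioc_eq_integral_Ioo,
    ← intervalIntegral.integral_of_le hab, integral_cos_sq]

lemma pieceInt (α a b : ℝ) (ε : ℝ)
    (h : ∀ θ ∈ Set.Ioo a b, Real.sign (Real.cos θ * Real.cos (θ - α)) = ε) :
    IntegrableOn (fun θ => Real.sign (Real.cos θ * Real.cos (θ - α)) * Real.cos θ ^ 2)
      (Set.Ioc a b) := by
  have hres : volume.restrict (Set.Ioc a b) = volume.restrict (Set.Ioo a b) :=
    (Measure.restrict_congr_set (Ioo_ae_eq_Ioc (μ := volume) (a := a) (b := b))).symm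
  unfold IntegrableOn
  rw [hres]
  have hc : Integrable (fun θ => ε * Real.cos θ ^ 2) (volume.restrict (Set.Ioo a b)) := by
    have : IntegrableOn (fun θ => ε * Real.cos θ ^ 2) (Set.Ioc a b) :=
      (continuous_const.mul (Real.continuous_cos.pow 2)).integrableOn_Ioc
    exact (this.mono_set Set.Ioo_subset_Ioc_self)
  refine hc.congr ?_
  refine (ae_restrict_iff' measurableSet_Ioo).2 (Filter.Eventually.of_forall fun θ hθ => ?_)
  simp only
  rw [h θ hθ]

lemma angular (α : ℝ) (h0 : 0 < α) (h2 : α ≤ π / 2) :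
    ∫ θ in Set.Ioo (-π) π, Real.sign (Real.cos θ * Real.cos (θ - α)) * Real.cos θ ^ 2
      = π - 2 * α + 2 * (Real.sin α * Real.cos α) := by
  have hπ := Real.pi_pos
  -- sign facts on the five pieces
  have p1 : ∀ θ ∈ Set.Ioo (-π) (-(π/2)), Real.sign (Real.cos θ * Real.cos (θ - α)) = 1 := by
    intro θ ⟨hl, hr⟩
    have hc : Real.cos θ < 0 := by
      rw [← Real.cos_neg]
      exact Real.cos_neg_of_pi_div_two_lt_of_lt (by linarith) (by linarith)
    have hd : Real.cos (θ - α) < 0 := by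
      rw [show θ - α = -(α - θ) by ring, Real.cos_neg]
      exact Real.cos_neg_of_pi_div_two_lt_of_lt (by linarith) (by linarith)
    exact Real.sign_of_pos (mul_pos_of_neg_of_neg hc hd)
  have p2 : ∀ θ ∈ Set.Ioo (-(π/2)) (α - π/2), Real.sign (Real.cos θ * Real.cos (θ - α)) = -1 := by
    intro θ ⟨hl, hr⟩
    have hc : 0 < Real.cos θ := Real.cos_pos_of_mem_Ioo ⟨by linarith, by linarith⟩
    have hd : Real.cos (θ - α) < 0 := by
      rw [show θ - α = -(α - θ) by ring, Real.cos_neg]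
      exact Real.cos_neg_of_pi_div_two_lt_of_lt (by linarith) (by linarith)
    exact Real.sign_of_neg (mul_neg_of_pos_of_neg hc hd)
  have p3 : ∀ θ ∈ Set.Ioo (α - π/2) (π/2), Real.sign (Real.cos θ * Real.cos (θ - α)) = 1 := by
    intro θ ⟨hl, hr⟩
    have hc : 0 < Real.cos θ := Real.cos_pos_of_mem_Ioo ⟨by linarith, by linarith⟩
    have hd : 0 < Real.cos (θ - α) := Real.cos_pos_of_mem_Ioo ⟨by linarith, by linarith⟩
    exact Real.sign_of_pos (mul_pos hc hd)
  have p4 : ∀ θ ∈ Set.Ioo (π/2) (α + π/2), Real.sign (Real.cos θ * Real.cos (θ - α)) = -1 := by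
    intro θ ⟨hl, hr⟩
    have hc : Real.cos θ < 0 := Real.cos_neg_of_pi_div_two_lt_of_lt (by linarith) (by linarith)
    have hd : 0 < Real.cos (θ - α) := Real.cos_pos_of_mem_Ioo ⟨by linarith, by linarith⟩
    exact Real.sign_of_neg (mul_neg_of_neg_of_pos hc hd)
  have p5 : ∀ θ ∈ Set.Ioo (α + π/2) π, Real.sign (Real.cos θ * Real.cos (θ - α)) = 1 := by
    intro θ ⟨hl, hr⟩
    have hc : Real.cos θ < 0 := Real.cos_neg_of_pi_div_two_lt_of_lt (by linarith) (by linarith)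
    have hd : Real.cos (θ - α) < 0 := Real.cos_neg_of_pi_div_two_lt_of_lt (by linarith) (by linarith)
    exact Real.sign_of_pos (mul_pos_of_neg_of_neg hc hd)
  -- orderings
  have o1 : (-π : ℝ) ≤ -(π/2) := by linarith
  have o2 : (-(π/2) : ℝ) ≤ α - π/2 := by linarith
  have o3 : α - π/2 ≤ π/2 := by linarith
  have o4 : (π/2 : ℝ) ≤ α + π/2 := by linarith
  have o5 : α + π/2 ≤ π := by linarith
  -- integrability
  have i1 := pieceInt α _ _ _ p1
  have i2 := pieceInt α _ _ _ p2
  have i3 := pieceInt α _ _ _ p3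
  have i4 := pieceInt α _ _ _ p4
  have i5 := pieceInt α _ _ _ p5
  have e1 := piece α _ _ o1 _ p1
  have e2 := piece α _ _ o2 _ p2
  have e3 := piece α _ _ o3 _ p3
  have e4 := piece α _ _ o4 _ p4
  have e5 := piece α _ _ o5 _ p5
  have J2 : IntegrableOn (fun θ => Real.sign (Real.cos θ * Real.cos (θ - α)) * Real.cos θ ^ 2)
      (Set.Ioc (-π) (α - π/2)) := by
    rw [← Set.Ioc_union_Ioc_eq_Ioc o1 o2]; exact i1.union i2
  have J3 : IntegrableOn (fun θ => Real.sign (Real.cos θ * Real.cos (θ - α)) * Real.cos θ ^ 2)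
      (Set.Ioc (-π) (π/2)) := by
    rw [← Set.Ioc_union_Ioc_eq_Ioc (by linarith : (-π:ℝ) ≤ α - π/2) o3]; exact J2.union i3
  have J4 : IntegrableOn (fun θ => Real.sign (Real.cos θ * Real.cos (θ - α)) * Real.cos θ ^ 2)
      (Set.Ioc (-π) (α + π/2)) := by
    rw [← Set.Ioc_union_Ioc_eq_Ioc (by linarith : (-π:ℝ) ≤ π/2) o4]; exact J3.union i4
  rw [← integral_Ioc_eq_integral_Ioo,
    ← Set.Ioc_union_Ioc_eq_Ioc (by linarith : (-π:ℝ) ≤ α + π/2) o5,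
    setIntegral_union (Set.Ioc_disjoint_Ioc_of_le le_rfl) measurableSet_Ioc J4 i5,
    ← Set.Ioc_union_Ioc_eq_Ioc (by linarith : (-π:ℝ) ≤ π/2) o4,
    setIntegral_union (Set.Ioc_disjoint_Ioc_of_le le_rfl) measurableSet_Ioc J3 i4,
    ← Set.Ioc_union_Ioc_eq_Ioc (by linarith : (-π:ℝ) ≤ α - π/2) o3,
    setIntegral_union (Set.Ioc_disjoint_Ioc_of_le le_rfl) measurableSet_Ioc J2 i3,
    ← Set.Ioc_union_Ioc_eq_Ioc o1 o2,
    setIntegral_union (Set.Ioc_disjoint_Ioc_of_le le_rfl) measurableSet_Ioc i1 i2,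
    e1, e2, e3, e4, e5]
  simp only [show α - π/2 = -(π/2 - α) from by ring, Real.cos_neg, Real.sin_neg,
    Real.cos_pi_div_two_sub, Real.sin_pi_div_two_sub,
    Real.cos_add_pi_div_two, Real.sin_add_pi_div_two,
    Real.cos_pi, Real.sin_pi, Real.cos_pi_div_two, Real.sin_pi_div_two]
  ring

end helpers

section
open Set

theorem expectation_sgn_UV_Vsq (σ : ℝ) (hσ0 : 0 ≤ σ) (hσ1 : σ < 1) :
    (∫ p : ℝ × ℝ, Real.sign ((σ * p.1 + Real.sqrt (1 - σ ^ 2) * p.2) * p.1) * p.1 ^ 2 *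
        ((2 * π)⁻¹ * Real.exp (-(p.1 ^ 2 + p.2 ^ 2) / 2))) =
      (2 / π) * (Real.sqrt (1 - σ ^ 2) * σ +
        Real.arctan (σ / Real.sqrt (1 - σ ^ 2))) := by
  have hπ := Real.pi_pos
  set α := Real.arccos σ with hα
  have hσα : Real.cos α = σ := Real.cos_arccos (by linarith) hσ1.le
  have hτα : Real.sqrt (1 - σ ^ 2) = Real.sin α := (Real.sin_arccos σ).symm
  have hα0 : 0 < α := Real.arccos_pos.2 hσ1
  have hα2 : α ≤ π / 2 := Real.arccos_le_pi_div_two.2 hσ0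
  rw [← integral_comp_polarCoord_symm]
  have key : Set.EqOn
      (fun p : ℝ × ℝ => p.1 • ((fun q : ℝ × ℝ =>
        Real.sign ((σ * q.1 + Real.sqrt (1 - σ ^ 2) * q.2) * q.1) * q.1 ^ 2 *
          ((2 * π)⁻¹ * Real.exp (-(q.1 ^ 2 + q.2 ^ 2) / 2))) (polarCoord.symm p)))
      (fun p : ℝ × ℝ => (p.1 ^ 3 * Real.exp (-p.1 ^ 2 / 2)) *
        ((2 * π)⁻¹ * (Real.sign (Real.cos p.2 * Real.cos (p.2 - α)) * Real.cos p.2 ^ 2)))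
      polarCoord.target := by
    rintro ⟨r, θ⟩ ⟨hr, hθ⟩
    simp only [polarCoord_symm_apply, smul_eq_mul]
    have hr' : (0:ℝ) < r := hr
    have hsq : (r * Real.cos θ) ^ 2 + (r * Real.sin θ) ^ 2 = r ^ 2 := by
      have := Real.sin_sq_add_cos_sq θ
      nlinarith
    have harg : (σ * (r * Real.cos θ) + Real.sqrt (1 - σ ^ 2) * (r * Real.sin θ)) *
        (r * Real.cos θ) = r ^ 2 * (Real.cos θ * Real.cos (θ - α)) := by
      rw [hτα, ← hσα, Real.cos_sub]
      ring
    rw [harg, hsq, sign_pos_mul (by positivity)]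
    ring
  rw [setIntegral_congr_fun polarCoord.open_target.measurableSet key,
    show polarCoord.target = Set.Ioi (0:ℝ) ×ˢ Set.Ioo (-π) π from rfl,
    Measure.volume_eq_prod, ← Measure.prod_restrict,
    MeasureTheory.integral_prod_mul (f := fun r : ℝ => r ^ 3 * Real.exp (-r ^ 2 / 2))
      (g := fun θ : ℝ => (2 * π)⁻¹ * (Real.sign (Real.cos θ * Real.cos (θ - α)) * Real.cos θ ^ 2)),
    radial, MeasureTheory.integral_const_mul, angular α hα0 hα2, hτα, ← hσα]
  have hsin : (0:ℝ) < Real.sin α := Real.sin_pos_of_pos_of_lt_pi hα0 (by linarith)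
  have harct : Real.arctan (Real.cos α / Real.sin α) = π / 2 - α := by
    rw [show Real.cos α / Real.sin α = Real.tan (π / 2 - α) by
      rw [Real.tan_eq_sin_div_cos, Real.sin_pi_div_two_sub, Real.cos_pi_div_two_sub]]
    exact Real.arctan_tan (by linarith) (by linarith)
  rw [harct]
  field_simp
  ring

end
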